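/- Let X be an n×p real matrix with ‖XᵀX - I_p‖₂ ≤ 1/4 and define X̂ := X(3/2·I_p - 1/2·XᵀX). Then ‖X̂ᵀX̂ - I_p‖_F ≤ (13/16)·‖XᵀX - I_p‖_F². -/

import Mathlib

open Matrix
open scoped BigOperators

/-- Frobenius norm of a real matrix. -/
noncomputable def frobNorm {n p : ℕ} (A : Matrix (Fin n) (Fin p) ℝ) : ℝ :=
  Real.sqrt (∑ i, ∑ j, (A i j) ^ 2)

/-- Spectral (ℓ₂ operator) norm of a real matrix. -/
noncomputable def specNorm {n p : ℕ} (A : Matrix (Fin n) (Fin p) ℝ) : ℝ :=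
  ‖LinearMap.toContinuousLinearMap (Matrix.toEuclideanLin A)‖

/-- Symmetrization operator Φ(M) = (M + Mᵀ)/2. -/
noncomputable def sym {p : ℕ} (M : Matrix (Fin p) (Fin p) ℝ) : Matrix (Fin p) (Fin p) ℝ :=
  ((1 : ℝ) / 2) • (M + Mᵀ)

/-- Frobenius (trace) inner product ⟨A, B⟩ = tr(AᵀB). -/
noncomputable def minner {n p : ℕ} (A B : Matrix (Fin n) (Fin p) ℝ) : ℝ :=
  Matrix.trace (Aᵀ * B)

/-- Convex subdifferential of `r` at `X` with respect to the trace inner product. -/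
def msubdiff {n p : ℕ} (r : Matrix (Fin n) (Fin p) ℝ → ℝ) (X : Matrix (Fin n) (Fin p) ℝ) :
    Set (Matrix (Fin n) (Fin p) ℝ) :=
  {W | ∀ Z, r X + minner W (Z - X) ≤ r Z}

section FrobAux
attribute [local instance] Matrix.frobeniusSeminormedAddCommGroup Matrix.frobeniusNormedRing

lemma frobNorm_eq_frobenius {n p : ℕ} (A : Matrix (Fin n) (Fin p) ℝ) :
    frobNorm A = ‖A‖ := by
  rw [frobNorm, Matrix.frobenius_norm_def, ← Real.sqrt_eq_rpow]
  congr 1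
  simp [Real.rpow_two, sq_abs]

lemma frob_mul_le {p : ℕ} (A B : Matrix (Fin p) (Fin p) ℝ) :
    frobNorm (A * B) ≤ frobNorm A * frobNorm B := by
  simp only [frobNorm_eq_frobenius]
  exact Matrix.frobenius_norm_mul A B

end FrobAux

lemma frob_nonneg {n p : ℕ} (A : Matrix (Fin n) (Fin p) ℝ) : 0 ≤ frobNorm A :=
  Real.sqrt_nonneg _

lemma spec_nonneg {n p : ℕ} (A : Matrix (Fin n) (Fin p) ℝ) : 0 ≤ specNorm A :=
  norm_nonneg _

lemma spec_smul {n p : ℕ} (c : ℝ) (A : Matrix (Fin n) (Fin p) ℝ) :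
    specNorm (c • A) = |c| * specNorm A := by
  rw [specNorm, _root_.map_smul, _root_.map_smul]
  rw [norm_smul c (LinearMap.toContinuousLinearMap (Matrix.toEuclideanLin A)),
    Real.norm_eq_abs, specNorm]

lemma spec_sub_le {n p : ℕ} (A B : Matrix (Fin n) (Fin p) ℝ) :
    specNorm (A - B) ≤ specNorm A + specNorm B := by
  rw [specNorm, _root_.map_sub, _root_.map_sub]
  exact norm_sub_le _ _

lemma spec_one_le {p : ℕ} : specNorm (1 : Matrix (Fin p) (Fin p) ℝ) ≤ 1 := by
  have h1 : Matrix.toEuclideanLin (1 : Matrix (Fin p) (Fin p) ℝ) = LinearMap.id := by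
    ext v
    simp [Matrix.toEuclideanLin_apply]
  rw [specNorm, h1]
  exact ContinuousLinearMap.norm_id_le

lemma spec_mul_frob_le {p : ℕ} (A B : Matrix (Fin p) (Fin p) ℝ) :
    frobNorm (A * B) ≤ specNorm A * frobNorm B := by
  have hs : 0 ≤ specNorm A := norm_nonneg _
  have hcol : ∀ j, ∑ i, ((A * B) i j) ^ 2 ≤ specNorm A ^ 2 * ∑ i, (B i j) ^ 2 := by
    intro j
    set v : EuclideanSpace ℝ (Fin p) := (WithLp.equiv 2 (Fin p → ℝ)).symm (fun i => B i j) with hv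
    have happ : LinearMap.toContinuousLinearMap (Matrix.toEuclideanLin A) v
        = (WithLp.equiv 2 (Fin p → ℝ)).symm (A *ᵥ fun i => B i j) := by
      simp [hv, Matrix.toEuclideanLin_apply_piLp_toLp]
    have hle : ‖LinearMap.toContinuousLinearMap (Matrix.toEuclideanLin A) v‖
        ≤ specNorm A * ‖v‖ := ContinuousLinearMap.le_opNorm _ v
    rw [happ] at hle
    have h1 : ‖(WithLp.equiv 2 (Fin p → ℝ)).symm (A *ᵥ fun i => B i j)‖
        = Real.sqrt (∑ i, ((A * B) i j) ^ 2) := by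
      rw [EuclideanSpace.norm_eq]
      congr 1
      refine Finset.sum_congr rfl fun i _ => ?_
      simp [Matrix.mul_apply, Matrix.mulVec, dotProduct, sq_abs]
    have h2 : ‖v‖ = Real.sqrt (∑ i, (B i j) ^ 2) := by
      rw [hv, EuclideanSpace.norm_eq]
      congr 1
      refine Finset.sum_congr rfl fun i _ => ?_
      simp [sq_abs]
    rw [h1, h2] at hle
    have hL : 0 ≤ ∑ i, ((A * B) i j) ^ 2 := Finset.sum_nonneg fun i _ => sq_nonneg _
    have hR : 0 ≤ ∑ i, (B i j) ^ 2 := Finset.sum_nonneg fun i _ => sq_nonneg _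
    calc ∑ i, ((A * B) i j) ^ 2 = Real.sqrt (∑ i, ((A * B) i j) ^ 2) ^ 2 :=
          (Real.sq_sqrt hL).symm
      _ ≤ (specNorm A * Real.sqrt (∑ i, (B i j) ^ 2)) ^ 2 :=
          pow_le_pow_left₀ (Real.sqrt_nonneg _) hle 2
      _ = specNorm A ^ 2 * ∑ i, (B i j) ^ 2 := by
          rw [mul_pow, Real.sq_sqrt hR]
  rw [frobNorm, frobNorm, Finset.sum_comm]
  calc Real.sqrt (∑ j, ∑ i, ((A * B) i j) ^ 2)
      ≤ Real.sqrt (∑ j, specNorm A ^ 2 * ∑ i, (B i j) ^ 2) :=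
        Real.sqrt_le_sqrt (Finset.sum_le_sum fun j _ => hcol j)
    _ = specNorm A * Real.sqrt (∑ i, ∑ j, (B i j) ^ 2) := by
        rw [← Finset.mul_sum, Real.sqrt_mul (sq_nonneg _), Real.sqrt_sq hs, Finset.sum_comm]

lemma poly_identity {p : ℕ} (A : Matrix (Fin p) (Fin p) ℝ) :
    (((3:ℝ)/2) • (1 : Matrix (Fin p) (Fin p) ℝ) - ((1:ℝ)/2) • A) * A *
      (((3:ℝ)/2) • (1 : Matrix (Fin p) (Fin p) ℝ) - ((1:ℝ)/2) • A) - 1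
    = (((1:ℝ)/4) • (A - 1) - ((3:ℝ)/4) • (1 : Matrix (Fin p) (Fin p) ℝ)) * ((A - 1) * (A - 1)) := by
  simp only [sub_mul, mul_sub, smul_mul_assoc, mul_smul_comm, smul_smul, smul_sub, sub_smul,
    mul_one, one_mul, mul_assoc]
  module

theorem stmt_2 {n p : ℕ} (X : Matrix (Fin n) (Fin p) ℝ)
    (hX : specNorm (Xᵀ * X - 1) ≤ 1 / 4)
    (Xhat : Matrix (Fin n) (Fin p) ℝ)
    (hXhat : Xhat = X * (((3 : ℝ) / 2) • (1 : Matrix (Fin p) (Fin p) ℝ) - ((1 : ℝ) / 2) • (Xᵀ * X))) :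
    frobNorm (Xhatᵀ * Xhat - 1) ≤ (13 / 16) * frobNorm (Xᵀ * X - 1) ^ 2 := by
  set A := Xᵀ * X with hA
  set E := A - 1 with hE
  set S := (((3:ℝ)/2) • (1 : Matrix (Fin p) (Fin p) ℝ) - ((1:ℝ)/2) • A) with hS
  have hST : Sᵀ = S := by
    rw [hS]
    rw [transpose_sub, transpose_smul, transpose_smul, transpose_one, hA, transpose_mul,
      transpose_transpose]
  have hkey : Xhatᵀ * Xhat - 1
      = (((1:ℝ)/4) • E - ((3:ℝ)/4) • (1 : Matrix (Fin p) (Fin p) ℝ)) * (E * E) := by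
    have : Xhatᵀ * Xhat = S * A * S := by
      rw [hXhat, transpose_mul, hST, hA]
      rw [Matrix.mul_assoc S Xᵀ (X * S), Matrix.mul_assoc S (Xᵀ * X) S, Matrix.mul_assoc Xᵀ X S]
    rw [this, hE, poly_identity]
  set M := (((1:ℝ)/4) • E - ((3:ℝ)/4) • (1 : Matrix (Fin p) (Fin p) ℝ)) with hM
  have hMspec : specNorm M ≤ 13/16 := by
    calc specNorm M ≤ specNorm (((1:ℝ)/4) • E) + specNorm (((3:ℝ)/4) • (1 : Matrix (Fin p) (Fin p) ℝ)) :=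
          spec_sub_le _ _
      _ = (1/4) * specNorm E + (3/4) * specNorm (1 : Matrix (Fin p) (Fin p) ℝ) := by
          rw [spec_smul, spec_smul]
          rw [abs_of_nonneg (by norm_num : (0:ℝ) ≤ 1/4), abs_of_nonneg (by norm_num : (0:ℝ) ≤ 3/4)]
      _ ≤ (1/4) * (1/4) + (3/4) * 1 := by
          gcongr
          · exact spec_one_le
      _ = 13/16 := by norm_num
  have h1 : frobNorm (Xhatᵀ * Xhat - 1) ≤ specNorm M * frobNorm (E * E) := by
    rw [hkey]; exact spec_mul_frob_le M (E * E)
  have h2 : frobNorm (E * E) ≤ frobNorm E * frobNorm E := frob_mul_le E E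
  have h3 : 0 ≤ frobNorm E := frob_nonneg E
  have h4 : 0 ≤ specNorm M := spec_nonneg M
  calc frobNorm (Xhatᵀ * Xhat - 1) ≤ specNorm M * frobNorm (E * E) := h1
    _ ≤ (13/16) * (frobNorm E * frobNorm E) := by
        apply mul_le_mul hMspec h2 (frob_nonneg _) (by norm_num)
    _ = (13/16) * frobNorm E ^ 2 := by ring
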